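/- Let C be a 4×4 complex matrix and consider the linear system on the space of symmetric 4×4 matrices X given by requiring CX to be symmetric. If C has four distinct eigenvalues (Jordan type 1|1|1|1), then the space of symmetric X with CX symmetric has dimension exactly 4. -/

import Mathlib

/-!
STATEMENT 5.  For a 4×4 complex matrix C, the space of symmetric 4×4 matrices
X such that CX is symmetric is a linear subspace of the 10-dimensional space
of symmetric matrices.  If C has four distinct eigenvalues (Jordan type
1|1|1|1, i.e. its characteristic polynomial splits with four distinct roots),
this solution space has dimension exactly 4.
-/

open Matrix Polynomial

/-- The space of symmetric matrices X with CX symmetric. -/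
noncomputable def solSpace (C : Matrix (Fin 4) (Fin 4) ℂ) :
    Submodule ℂ (Matrix (Fin 4) (Fin 4) ℂ) where
  carrier := {X | X.IsSymm ∧ (C * X).IsSymm}
  add_mem' := fun hX hY =>
    ⟨hX.1.add hY.1, by rw [Matrix.mul_add]; exact hX.2.add hY.2⟩
  zero_mem' := ⟨Matrix.isSymm_zero, by rw [Matrix.mul_zero]; exact Matrix.isSymm_zero⟩
  smul_mem' := fun c X hX =>
    ⟨hX.1.smul c, by rw [Matrix.mul_smul]; exact hX.2.smul c⟩

/-- Diagonal case: for distinct diagonal entries, the solution space is the space of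
diagonal matrices, of dimension 4. -/
lemma solSpace_diag (μ : Fin 4 → ℂ) (hμ : Function.Injective μ) :
    Module.finrank ℂ (solSpace (Matrix.diagonal μ)) = 4 := by
  have key : ∀ Y ∈ solSpace (Matrix.diagonal μ), ∀ i j, i ≠ j → Y i j = 0 := by
    intro Y hY i j hij
    have h1 : Y j i = Y i j := by
      have := congrFun (congrFun hY.1 i) j
      simpa [Matrix.transpose_apply] using this
    have h2 := congrFun (congrFun hY.2 i) j
    simp [Matrix.transpose_apply, Matrix.diagonal_mul, h1] at h2
    rcases h2 with h2 | h2
    · first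
      | exact absurd (hμ h2) hij
      | exact absurd (hμ h2) hij.symm
      | exact absurd (hμ h2.symm) hij
      | exact absurd (hμ h2.symm) hij.symm
    · exact h2
  have e : (Fin 4 → ℂ) ≃ₗ[ℂ] solSpace (Matrix.diagonal μ) :=
    { toFun := fun d => ⟨Matrix.diagonal d, Matrix.isSymm_diagonal d, by
        rw [Matrix.diagonal_mul_diagonal]; exact Matrix.isSymm_diagonal _⟩
      map_add' := fun a b => by ext : 1; simp [Matrix.diagonal_add]
      map_smul' := fun c a => by ext : 1; simp [Matrix.diagonal_smul]
      invFun := fun Y i => Y.1 i i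
      left_inv := fun d => by ext i; simp
      right_inv := fun Y => by
        ext i j
        rcases eq_or_ne i j with rfl | hij
        · simp
        · simp [Matrix.diagonal_apply_ne _ hij, (key Y.1 Y.2 i j hij).symm] }
  rw [← e.finrank_eq]
  simp

lemma conj_cancel (Q : Matrix (Fin 4) (Fin 4) ℂ) [Invertible Q]
    {A B : Matrix (Fin 4) (Fin 4) ℂ} (h : Q * A * Qᵀ = Q * B * Qᵀ) : A = B := by
  have h2 := congrArg (fun M => ⅟Q * M * ⅟(Qᵀ)) h
  simpa [Matrix.mul_assoc, ← Matrix.mul_assoc (⅟Q) Q] using h2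

/-- Conjugation by an invertible matrix as a linear equivalence on matrices. -/
noncomputable def conjEquiv (Q : Matrix (Fin 4) (Fin 4) ℂ) [Invertible Q] :
    Matrix (Fin 4) (Fin 4) ℂ ≃ₗ[ℂ] Matrix (Fin 4) (Fin 4) ℂ where
  toFun X := Q * X * Qᵀ
  map_add' X Y := by noncomm_ring
  map_smul' c X := by simp [Matrix.mul_smul, Matrix.smul_mul]
  invFun Y := ⅟Q * Y * (⅟Q)ᵀ
  left_inv X := by
    simp [Matrix.mul_assoc, ← Matrix.transpose_mul, ← Matrix.mul_assoc (⅟Q) Q]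
  right_inv Y := by
    simp [Matrix.mul_assoc, ← Matrix.transpose_mul, ← Matrix.mul_assoc Q (⅟Q)]

@[simp] lemma conjEquiv_apply (Q : Matrix (Fin 4) (Fin 4) ℂ) [Invertible Q]
    (X : Matrix (Fin 4) (Fin 4) ℂ) : conjEquiv Q X = Q * X * Qᵀ := rfl

lemma mem_solSpace_conj (C D P : Matrix (Fin 4) (Fin 4) ℂ) [Invertible P]
    (hQC : ⅟P * C = D * ⅟P) (X : Matrix (Fin 4) (Fin 4) ℂ) :
    X ∈ solSpace C ↔ (⅟P * X * (⅟P)ᵀ) ∈ solSpace D := by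
  have hQ : Invertible (⅟P) := invertibleInvOf
  have hD : D * (⅟P * X * (⅟P)ᵀ) = ⅟P * (C * X) * (⅟P)ᵀ := by
    rw [← Matrix.mul_assoc, ← Matrix.mul_assoc, ← hQC, Matrix.mul_assoc (⅟P) C X]
  constructor
  · rintro ⟨h1, h2⟩
    refine ⟨?_, ?_⟩
    · show (⅟P * X * (⅟P)ᵀ)ᵀ = _
      rw [Matrix.transpose_mul, Matrix.transpose_mul, Matrix.transpose_transpose,
        Matrix.IsSymm.eq h1, Matrix.mul_assoc]
    · show (D * (⅟P * X * (⅟P)ᵀ))ᵀ = _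
      rw [hD, Matrix.transpose_mul, Matrix.transpose_mul, Matrix.transpose_transpose,
        Matrix.IsSymm.eq h2]
      simp [Matrix.mul_assoc]
  · rintro ⟨h1, h2⟩
    have e1 : (⅟P * X * (⅟P)ᵀ)ᵀ = ⅟P * Xᵀ * (⅟P)ᵀ := by
      rw [Matrix.transpose_mul, Matrix.transpose_mul, Matrix.transpose_transpose,
        Matrix.mul_assoc]
    refine ⟨?_, ?_⟩
    · show Xᵀ = X
      apply conj_cancel (⅟P)
      have := h1
      rw [Matrix.IsSymm, e1] at this
      exact this
    · show (C * X)ᵀ = C * X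
      apply conj_cancel (⅟P)
      have := h2
      rw [Matrix.IsSymm, hD, Matrix.transpose_mul, Matrix.transpose_mul,
        Matrix.transpose_transpose] at this
      simpa [Matrix.mul_assoc] using this

lemma solSpace_conj (C D P : Matrix (Fin 4) (Fin 4) ℂ) [Invertible P]
    (h : C * P = P * D) :
    Module.finrank ℂ (solSpace C) = Module.finrank ℂ (solSpace D) := by
  have hQC : ⅟P * C = D * ⅟P := by
    have : ⅟P * (C * P) * ⅟P = ⅟P * (P * D) * ⅟P := by rw [h]
    calc ⅟P * C = ⅟P * (C * P) * ⅟P := by simp [Matrix.mul_assoc]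
    _ = ⅟P * (P * D) * ⅟P := this
    _ = D * ⅟P := by simp [← Matrix.mul_assoc]
  have hmem : ∀ X, X ∈ solSpace C ↔ (conjEquiv (⅟P)) X ∈ solSpace D := by
    intro X
    rw [conjEquiv_apply]
    exact mem_solSpace_conj C D P hQC X
  have : solSpace C = (solSpace D).comap (conjEquiv (⅟P) : _ →ₗ[ℂ] _) := by
    ext X; exact hmem X
  rw [this]
  exact LinearEquiv.finrank_eq (LinearEquiv.ofSubmodule' (conjEquiv (⅟P)) (solSpace D))

lemma exists_conj_diag (C : Matrix (Fin 4) (Fin 4) ℂ) (μ : Fin 4 → ℂ)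
    (hμ : Function.Injective μ)
    (hcp : C.charpoly = ∏ i, (X - Polynomial.C (μ i))) :
    ∃ P : Matrix (Fin 4) (Fin 4) ℂ, IsUnit P ∧ C * P = P * Matrix.diagonal μ := by
  have hev : ∀ i, ∃ v : Fin 4 → ℂ, v ≠ 0 ∧ C.mulVec v = μ i • v := by
    intro i
    have heval : C.charpoly.eval (μ i) = 0 := by
      rw [hcp, Polynomial.eval_prod]
      exact Finset.prod_eq_zero (Finset.mem_univ i) (by simp)
    have hdet : (C - Matrix.scalar (Fin 4) (μ i)).det = 0 := by
      have h1 : C.charpoly.eval (μ i) = (Matrix.scalar (Fin 4) (μ i) - C).det := by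
        rw [Matrix.charpoly, _root_.eval_det]
        congr 1
        ext a b
        rw [_root_.matPolyEquiv_eval]
        rcases eq_or_ne a b with rfl | hab
        · simp [Matrix.charmatrix_apply_eq, Matrix.scalar_apply]
        · simp [Matrix.charmatrix_apply_ne _ _ _ hab, Matrix.scalar_apply,
            Matrix.diagonal_apply_ne _ hab]
      have h2 : (C - Matrix.scalar (Fin 4) (μ i)) = -(Matrix.scalar (Fin 4) (μ i) - C) :=
        (neg_sub _ _).symm
      rw [h2, Matrix.det_neg, ← h1, heval]
      simp
    obtain ⟨v, hvne, hveq⟩ := Matrix.exists_mulVec_eq_zero_iff.mpr hdet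
    refine ⟨v, hvne, ?_⟩
    have h3 : C.mulVec v - (Matrix.scalar (Fin 4) (μ i)).mulVec v = 0 := by
      rw [← Matrix.sub_mulVec]; exact hveq
    have h4 : (Matrix.scalar (Fin 4) (μ i)).mulVec v = μ i • v := by
      ext j; simp [Matrix.mulVec, Matrix.scalar_apply, dotProduct,
        Matrix.diagonal_apply, Finset.sum_ite_eq]
    rw [h4] at h3
    linear_combination (norm := module) h3
  choose v hv0 hv using hev
  have hli : LinearIndependent ℂ v := by
    apply Module.End.eigenvectors_linearIndependent' (Matrix.mulVecLin C) μ hμ v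
    intro i
    refine ⟨Module.End.mem_eigenspace_iff.mpr ?_, hv0 i⟩
    simpa using hv i
  have hcard : Fintype.card (Fin 4) = Module.finrank ℂ (Fin 4 → ℂ) := by simp
  let b : Module.Basis (Fin 4) ℂ (Fin 4 → ℂ) := basisOfLinearIndependentOfCardEqFinrank hli hcard
  have hb : ⇑b = v := coe_basisOfLinearIndependentOfCardEqFinrank hli hcard
  let P : Matrix (Fin 4) (Fin 4) ℂ := (Pi.basisFun ℂ (Fin 4)).toMatrix ⇑b
  have : Invertible P := (Pi.basisFun ℂ (Fin 4)).invertibleToMatrix b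
  refine ⟨P, isUnit_of_invertible P, ?_⟩
  have hP : ∀ i j, P i j = v j i := by
    intro i j
    simp [P, Module.Basis.toMatrix_apply, hb]
  ext i j
  rw [Matrix.mul_apply, Matrix.mul_diagonal]
  have : ∑ k, C i k * P k j = (C.mulVec (v j)) i := by
    simp [Matrix.mulVec, dotProduct, hP]
  rw [this, hv j, hP]
  simp [mul_comm]

theorem solSpace_dim_of_distinct_eigenvalues
    (C : Matrix (Fin 4) (Fin 4) ℂ)
    (hC : ∃ μ : Fin 4 → ℂ, Function.Injective μ ∧
      C.charpoly = ∏ i, (X - Polynomial.C (μ i))) :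
    Module.finrank ℂ (solSpace C) = 4 := by
  obtain ⟨μ, hμ, hcp⟩ := hC
  obtain ⟨P, hPu, hCP⟩ := exists_conj_diag C μ hμ hcp
  letI := hPu.invertible
  rw [solSpace_conj C (Matrix.diagonal μ) P hCP]
  exact solSpace_diag μ hμ
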